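/- The third order positive Cauchy tensor A with a_{ijk} = 1/(c_i + c_j + c_k), where c is a strictly positive vector with pairwise distinct components, is a third order positive definite symmetric tensor (each slice matrix A(i) is positive definite). -/

import Mathlib

open Real MeasureTheory Set Matrix
open scoped ENNReal

lemma integral_exp_neg_mul' {b : ℝ} (hb : 0 < b) :
    ∫ t in Ioi (0:ℝ), Real.exp (-(b * t)) = 1 / b := by
  have := integral_comp_mul_left_Ioi (fun x => Real.exp (-x)) 0 hb
  simp only [mul_zero, integral_exp_neg_Ioi_zero, smul_eq_mul, mul_one] at this
  simpa [one_div] using this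

lemma exp_linindep' {n : ℕ} {d : Fin n → ℝ} (hd : Function.Injective d) :
    LinearIndependent ℝ (fun j : Fin n => fun t : ℝ => Real.exp (d j * t)) := by
  let φ : Fin n → (Multiplicative ℝ →* ℝ) := fun j =>
    { toFun := fun t => Real.exp (d j * (Multiplicative.toAdd t))
      map_one' := by simp
      map_mul' := fun s t => by simp [toAdd_mul, mul_add, Real.exp_add] }
  have hφ : Function.Injective φ := by
    intro j k h
    have := congrArg (fun f => f.toFun (Multiplicative.ofAdd (1:ℝ))) h
    simp only [φ, mul_one, toAdd_ofAdd] at this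
    exact hd (Real.exp_injective this)
  exact (linearIndependent_monoidHom (Multiplicative ℝ) ℝ).comp φ hφ

theorem cauchy_tensor_pos_def
    (n : ℕ) (c : Fin n → ℝ) (hc : ∀ i, 0 < c i)
    (hinj : Function.Injective c) :
    ∀ i : Fin n,
      Matrix.PosDef (Matrix.of fun j k : Fin n => 1 / (c i + c j + c k)) := by
  intro i
  set d : Fin n → ℝ := fun j => c j + c i / 2 with hd_def
  have hd : ∀ j, 0 < d j := fun j => add_pos (hc j) (half_pos (hc i))
  have hdinj : Function.Injective d := fun j k h => by
    have : c j = c k := by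
      have := h; simp only [hd_def] at this; linarith
    exact hinj this
  have hsum : ∀ j k, c i + c j + c k = d j + d k := fun j k => by
    simp only [hd_def]; ring
  refine Matrix.posDef_iff_dotProduct_mulVec.mpr ⟨?_, ?_⟩
  · show _ = _
    ext j k
    simp [Matrix.conjTranspose_apply]
    ring_nf
  · intro x hx
    set F : ℝ → ℝ := fun t => ∑ j, x j * Real.exp (-d j * t) with hF_def
    set g : Fin n → Fin n → ℝ → ℝ :=
      fun j k t => (x j * Real.exp (-d j * t)) * (x k * Real.exp (-d k * t)) with hg_def
    have hexp : ∀ j k : Fin n, (fun t => Real.exp (-d j * t) * Real.exp (-d k * t))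
        = fun t => Real.exp (-((d j + d k) * t)) := by
      intro j k; funext t; rw [← Real.exp_add]; ring_nf
    have hgint : ∀ j k : Fin n, IntegrableOn (g j k) (Ioi (0:ℝ)) := by
      intro j k
      have : g j k = fun t => (x j * x k) * Real.exp (-(d j + d k) * t) := by
        funext t; simp only [hg_def]
        rw [mul_mul_mul_comm, ← Real.exp_add]; ring_nf
      rw [this]
      exact (exp_neg_integrableOn_Ioi 0 (add_pos (hd j) (hd k))).const_mul _
    have hgval : ∀ j k : Fin n,
        ∫ t in Ioi (0:ℝ), g j k t = x j * (1 / (c i + c j + c k) * x k) := by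
      intro j k
      have : ∀ t : ℝ, g j k t = (x j * x k) * Real.exp (-((d j + d k) * t)) := by
        intro t; simp only [hg_def]
        rw [mul_mul_mul_comm, ← Real.exp_add]; ring_nf
      rw [MeasureTheory.integral_congr_ae (Filter.Eventually.of_forall this),
        MeasureTheory.integral_const_mul, integral_exp_neg_mul' (add_pos (hd j) (hd k)),
        hsum j k]
      ring
    have key : (star x) ⬝ᵥ ((Matrix.of fun j k : Fin n => 1 / (c i + c j + c k)) *ᵥ x)
        = ∫ t in Ioi (0:ℝ), (F t)^2 := by
      have hFsq : ∀ t : ℝ, (F t)^2 = ∑ j, ∑ k, g j k t := by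
        intro t
        rw [hF_def, sq, Finset.sum_mul_sum]
      rw [MeasureTheory.integral_congr_ae (Filter.Eventually.of_forall hFsq),
        MeasureTheory.integral_finset_sum _
          (fun j _ => integrable_finset_sum _ (fun k _ => hgint j k))]
      simp only [MeasureTheory.integral_finset_sum _ (fun k _ => hgint _ k)]
      simp only [hgval]
      simp [dotProduct, Matrix.mulVec, Finset.mul_sum]
    rw [key]
    -- positivity of the integral
    have hFcont : Continuous F := by
      apply continuous_finset_sum
      intro j _
      exact continuous_const.mul ((continuous_const.mul continuous_id).rexp)
    have hFint : IntegrableOn (fun t => (F t)^2) (Ioi (0:ℝ)) := by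
      have hFsq : (fun t => (F t)^2) = fun t => ∑ j, ∑ k, g j k t := by
        funext t; rw [hF_def, sq, Finset.sum_mul_sum]
      rw [hFsq]
      exact integrable_finset_sum _ (fun j _ => integrable_finset_sum _ (fun k _ => hgint j k))
    -- find a point where F ≠ 0
    have ht0 : ∃ t0 ∈ Ioi (0:ℝ), F t0 ≠ 0 := by
      by_contra h
      push_neg at h
      have hF0 : EqOn F 0 (Ioi (0:ℝ)) := fun t ht => h t ht
      have hFan : AnalyticOnNhd ℝ F univ := by
        apply Finset.analyticOnNhd_fun_sum
        intro j _ z _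
        exact analyticAt_const.mul ((analyticAt_const.mul (analyticAt_id)).rexp)
      have hev : F =ᶠ[nhds (1:ℝ)] 0 :=
        Filter.eventuallyEq_of_mem (Ioi_mem_nhds one_pos) hF0
      have hall : EqOn F 0 univ :=
        hFan.eqOn_zero_of_preconnected_of_eventuallyEq_zero isPreconnected_univ
          (mem_univ 1) hev
      have hdninj : Function.Injective (fun j => -d j) := fun j k h' =>
        hdinj (neg_injective h')
      have li := exp_linindep' hdninj
      have hzero : ∀ j, x j = 0 := by
        apply Fintype.linearIndependent_iff.mp li
        funext t
        have := hall (mem_univ t)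
        simpa [hF_def, Finset.sum_apply] using this
      exact hx (funext hzero)
    obtain ⟨t0, ht0mem, ht0ne⟩ := ht0
    rw [setIntegral_pos_iff_support_of_nonneg_ae
      (Filter.Eventually.of_forall fun t => sq_nonneg (F t)) hFint]
    have hopen : IsOpen ({t | F t ≠ 0} ∩ Ioi 0) :=
      (isOpen_ne.preimage hFcont).inter isOpen_Ioi
    have hsub : {t | F t ≠ 0} ∩ Ioi 0 ⊆ Function.support (fun t => (F t)^2) ∩ Ioi 0 := by
      intro t ⟨h1, h2⟩
      exact ⟨pow_ne_zero 2 h1, h2⟩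
    calc (0:ℝ≥0∞) < volume ({t | F t ≠ 0} ∩ Ioi 0) :=
          hopen.measure_pos volume ⟨t0, ht0ne, ht0mem⟩
      _ ≤ _ := measure_mono hsub
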